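/- Let Φ(t,s) = a t³ + b t² s + c t s² + d s³ be nondegenerate (matrix [[3a,2b,c],[b,2c,3d]] of rank 2) and let u, v ∈ ℝ⁵. Suppose that the determinant of the 2×2 matrix [[u₁ + u₃Φ_tt + u₄Φ_st + u₅Φ_t, v₁ + v₃Φ_tt + v₄Φ_st + v₅Φ_t],[u₂ + u₃Φ_ts + u₄Φ_ss + u₅Φ_s, v₂ + v₃Φ_ts + v₄Φ_ss + v₅Φ_s]] vanishes identically as a polynomial in (t,s). Then the 2×2 minors d₃₅ = u₃v₅ − u₅v₃ and d₄₅ = u₄v₅ − u₅v₄ both vanish, and d₁₂ = u₁v₂ − u₂v₁ = 0. -/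
import Mathlib


/-- if the determinant of the 2×2 matrix built from u and v and
the derivatives of a nondegenerate cubic Φ vanishes identically in (t,s), then
the minors d₃₅, d₄₅ and d₁₂ all vanish. -/
theorem stmt17 (a b c d : ℝ)
    (hrank : (Matrix.rank !![3 * a, 2 * b, c; b, 2 * c, 3 * d]) = 2)
    (u₁ u₂ u₃ u₄ u₅ v₁ v₂ v₃ v₄ v₅ : ℝ)
    (hdet : ∀ t s : ℝ,
      Matrix.det
        !![u₁ + u₃ * (6 * a * t + 2 * b * s) + u₄ * (2 * b * t + 2 * c * s)
             + u₅ * (3 * a * t ^ 2 + 2 * b * t * s + c * s ^ 2),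
           v₁ + v₃ * (6 * a * t + 2 * b * s) + v₄ * (2 * b * t + 2 * c * s)
             + v₅ * (3 * a * t ^ 2 + 2 * b * t * s + c * s ^ 2);
           u₂ + u₃ * (2 * b * t + 2 * c * s) + u₄ * (2 * c * t + 6 * d * s)
             + u₅ * (b * t ^ 2 + 2 * c * t * s + 3 * d * s ^ 2),
           v₂ + v₃ * (2 * b * t + 2 * c * s) + v₄ * (2 * c * t + 6 * d * s)
             + v₅ * (b * t ^ 2 + 2 * c * t * s + 3 * d * s ^ 2)] = 0) :
    u₃ * v₅ - u₅ * v₃ = 0 ∧ u₄ * v₅ - u₅ * v₄ = 0 ∧ u₁ * v₂ - u₂ * v₁ = 0 := by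
  -- Expand the determinant hypothesis.
  have hd : ∀ t s : ℝ,
      (u₁ + u₃ * (6 * a * t + 2 * b * s) + u₄ * (2 * b * t + 2 * c * s)
          + u₅ * (3 * a * t ^ 2 + 2 * b * t * s + c * s ^ 2)) *
        (v₂ + v₃ * (2 * b * t + 2 * c * s) + v₄ * (2 * c * t + 6 * d * s)
          + v₅ * (b * t ^ 2 + 2 * c * t * s + 3 * d * s ^ 2)) -
      (v₁ + v₃ * (6 * a * t + 2 * b * s) + v₄ * (2 * b * t + 2 * c * s)
          + v₅ * (3 * a * t ^ 2 + 2 * b * t * s + c * s ^ 2)) *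
        (u₂ + u₃ * (2 * b * t + 2 * c * s) + u₄ * (2 * c * t + 6 * d * s)
          + u₅ * (b * t ^ 2 + 2 * c * t * s + 3 * d * s ^ 2)) = 0 := by
    intro t s
    have h := hdet t s
    rwa [Matrix.det_fin_two_of] at h
  set d35 := u₃ * v₅ - u₅ * v₃ with hd35
  set d45 := u₄ * v₅ - u₅ * v₄ with hd45
  -- coefficient of t^3
  have h30 : d45 * (2 * b ^ 2 - 6 * a * c) = 0 := by
    rw [hd45]
    linear_combination (1/2 : ℝ) * hd 0 0 - (1/2 : ℝ) * hd 1 0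
      - (1/6 : ℝ) * hd (-1) 0 + (1/6 : ℝ) * hd 2 0
  -- coefficient of t^2 s
  have h21 : d35 * (6 * a * c - 2 * b ^ 2) + d45 * (2 * b * c - 18 * a * d) = 0 := by
    rw [hd35, hd45]
    linear_combination hd 0 0 - (1/2 : ℝ) * hd 1 0 - (1/2 : ℝ) * hd (-1) 0
      - hd 0 1 + (1/2 : ℝ) * hd 1 1 + (1/2 : ℝ) * hd (-1) 1
  -- coefficient of t s^2
  have h12c : d35 * (18 * a * d - 2 * b * c) + d45 * (2 * c ^ 2 - 6 * b * d) = 0 := by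
    rw [hd35, hd45]
    linear_combination hd 0 0 - hd 1 0 - (1/2 : ℝ) * hd 0 1 - (1/2 : ℝ) * hd 0 (-1)
      + (1/2 : ℝ) * hd 1 1 + (1/2 : ℝ) * hd 1 (-1)
  -- coefficient of s^3
  have h03 : d35 * (6 * b * d - 2 * c ^ 2) = 0 := by
    rw [hd35]
    linear_combination (1/2 : ℝ) * hd 0 0 - (1/2 : ℝ) * hd 0 1
      - (1/6 : ℝ) * hd 0 (-1) + (1/6 : ℝ) * hd 0 2
  -- nondegeneracy: the three minors do not all vanish
  have hnz : ¬ (6 * a * c - 2 * b ^ 2 = 0 ∧ 9 * a * d - b * c = 0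
      ∧ 6 * b * d - 2 * c ^ 2 = 0) := by
    rintro ⟨hp, hq, hr⟩
    set A : Matrix (Fin 2) (Fin 3) ℝ := !![3 * a, 2 * b, c; b, 2 * c, 3 * d] with hA
    have hsurj : Function.Surjective A.mulVecLin := by
      rw [← LinearMap.range_eq_top]
      apply Submodule.eq_top_of_finrank_eq
      rw [Module.finrank_fin_fun]
      exact hrank
    obtain ⟨x, hx⟩ := hsurj ![1, 0]
    obtain ⟨y, hy⟩ := hsurj ![0, 1]
    have hx0 : 3 * a * x 0 + 2 * b * x 1 + c * x 2 = 1 := by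
      have := congrFun hx 0
      simpa [hA, Matrix.mulVec, dotProduct, Fin.sum_univ_three,
        mul_comm] using this
    have hx1 : b * x 0 + 2 * c * x 1 + 3 * d * x 2 = 0 := by
      have := congrFun hx 1
      simpa [hA, Matrix.mulVec, dotProduct, Fin.sum_univ_three,
        mul_comm] using this
    have hy1 : b * y 0 + 2 * c * y 1 + 3 * d * y 2 = 1 := by
      have := congrFun hy 1
      simpa [hA, Matrix.mulVec, dotProduct, Fin.sum_univ_three,
        mul_comm] using this
    have hb : b = 0 := by
      linear_combination 3 * a * hx1 - b * hx0 - x 1 * hp - x 2 * hq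
    have hc : c = 0 := by
      linear_combination b * hx1 - c * hx0 + (x 0) / 2 * hp - (x 2) / 2 * hr
    have hdd : d = 0 := by
      linear_combination (c / 3) * hx1 - d * hx0 + (x 0) / 3 * hq + (x 1) / 3 * hr
    rw [hb, hc, hdd] at hy1
    norm_num at hy1
  -- d₁₂ = 0 from the constant term
  have h12 : u₁ * v₂ - u₂ * v₁ = 0 := by linear_combination hd 0 0
  -- Now solve for d35, d45
  have key : d35 = 0 ∧ d45 = 0 := by
    by_cases hp : 6 * a * c - 2 * b ^ 2 = 0
    · by_cases hq : 9 * a * d - b * c = 0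
      · have hr : 6 * b * d - 2 * c ^ 2 ≠ 0 := fun hr => hnz ⟨hp, hq, hr⟩
        have h1 : d35 = 0 := by
          rcases mul_eq_zero.mp h03 with h | h
          · exact h
          · exact absurd h hr
        have h2 : d45 = 0 := by
          have : d45 * (6 * b * d - 2 * c ^ 2) = 0 := by
            linear_combination -h12c + (18 * a * d - 2 * b * c) * h1
          rcases mul_eq_zero.mp this with h | h
          · exact h
          · exact absurd h hr
        exact ⟨h1, h2⟩
      · -- q ≠ 0
        have h1 : d35 = 0 := by
          have hsq : d35 ^ 2 * (2 * (9 * a * d - b * c)) = 0 := by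
            linear_combination d35 * h12c + d45 * h03
          have : d35 ^ 2 = 0 := by
            rcases mul_eq_zero.mp hsq with h | h
            · exact h
            · exact absurd (by linarith) hq
          exact pow_eq_zero_iff (n := 2) (by norm_num) |>.mp this
        have h2 : d45 = 0 := by
          have hq2 : d45 * (2 * (9 * a * d - b * c)) = 0 := by
            linear_combination -h21 + d35 * hp
          rcases mul_eq_zero.mp hq2 with h | h
          · exact h
          · exact absurd (by linarith) hq
        exact ⟨h1, h2⟩
    · -- p ≠ 0
      have h2 : d45 = 0 := by
        have : d45 * (-(6 * a * c - 2 * b ^ 2)) = 0 := by linear_combination h30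
        rcases mul_eq_zero.mp this with h | h
        · exact h
        · exact absurd (by linarith) hp
      have h1 : d35 = 0 := by
        have : d35 * (6 * a * c - 2 * b ^ 2) = 0 := by
          linear_combination h21 - (2 * b * c - 18 * a * d) * h2
        rcases mul_eq_zero.mp this with h | h
        · exact h
        · exact absurd h hp
      exact ⟨h1, h2⟩
  exact ⟨key.1, key.2, h12⟩
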